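/- arXiv:1007.3546 — 5 statements merged into one kernel-verified Lean document; each statement's English description precedes it below -/
import Mathlib

section
/- Let G be a finite k-regular graph, Ω ⊆ V(G), and let λ(Ω) = min{ D[f,f]/⟨f,f⟩ : f supported on Ω, f ≠ 0 } be the first Dirichlet eigenvalue of Ω. Let φ be a minimizer attaining λ(Ω), extended by zero to f on all of G, with f ≥ 0. If f₁,…,f_d are images of f under graph automorphisms of G and F = Σᵢ fᵢ, then D[F,F] ≤ λ(Ω)·⟨F,F⟩. -/
/-- If `f` is a nonnegative minimizer of the Dirichlet quotient on `Ω` (extended by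
zero), and `F = Σᵢ f∘τᵢ` for graph automorphisms `τᵢ`, then `D[F,F] ≤ λ(Ω)·⟨F,F⟩`. -/
theorem stmt_3 {V : Type*} [Fintype V] [DecidableEq V]
    (G : SimpleGraph V) [DecidableRel G.Adj] (k : ℕ)
    (hreg : G.IsRegularOfDegree k)
    (lap : (V → ℝ) → (V → ℝ))
    (hlap : ∀ f x, lap f x = k * f x - ∑ y ∈ G.neighborFinset x, f y)
    (Ω : Finset V) (lam : ℝ)
    (hmin : IsLeast {r : ℝ | ∃ g : V → ℝ, g ≠ 0 ∧ (∀ x, x ∉ Ω → g x = 0) ∧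
      r = (∑ x, g x * lap g x) / (∑ x, (g x) ^ 2)} lam)
    (f : V → ℝ) (hf0 : f ≠ 0) (hfpos : ∀ x, 0 ≤ f x) (hfsupp : ∀ x, x ∉ Ω → f x = 0)
    (hfattain : (∑ x, f x * lap f x) / (∑ x, (f x) ^ 2) = lam)
    (d : ℕ) (τ : Fin d → G ≃g G)
    (F : V → ℝ) (hF : ∀ x, F x = ∑ i, f (τ i x)) :
    ∑ x, F x * lap F x ≤ lam * ∑ x, (F x) ^ 2 := by
  classical
  set N : ℝ := ∑ x, (f x) ^ 2 with hN
  have hNpos : 0 < N := by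
    obtain ⟨x0, hx0⟩ : ∃ x0, f x0 ≠ 0 := by
      by_contra h
      push_neg at h
      exact hf0 (funext h)
    refine Finset.sum_pos' (fun i _ => sq_nonneg _) ⟨x0, Finset.mem_univ _, ?_⟩
    positivity
  have hD : ∑ x, f x * lap f x = lam * N := by
    field_simp at hfattain
    linarith [hfattain]
  -- Euler–Lagrange type inequality: lap f x ≤ lam * f x pointwise
  have EL : ∀ x0, lap f x0 ≤ lam * f x0 := by
    intro x0
    by_cases hx0 : x0 ∈ Ω
    · -- perturbation argument
      by_contra hc
      push_neg at hc
      set c : ℝ := lap f x0 - lam * f x0 with hcdef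
      have hcpos : 0 < c := by simp [hcdef]; linarith
      set s : ℝ := min (c / (|(k : ℝ) - lam| + 1)) (N / (2 * f x0 + 1)) with hs
      have habs : 0 < |(k : ℝ) - lam| + 1 := by positivity
      have hden : 0 < 2 * f x0 + 1 := by have := hfpos x0; linarith
      have hspos : 0 < s := lt_min (by positivity) (by positivity)
      have hs1 : s * (|(k : ℝ) - lam| + 1) ≤ c := by
        rw [← le_div_iff₀ habs]; exact min_le_left _ _
      have hs2 : s * (2 * f x0 + 1) ≤ N := by
        rw [← le_div_iff₀ hden]; exact min_le_right _ _
      -- perturbed function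
      set g : V → ℝ := fun x => f x + (-s) * (if x = x0 then 1 else 0) with hg
      have hSg : ∑ x, (g x) ^ 2 = N + 2 * (-s) * f x0 + s ^ 2 := by
        have hpt : ∀ x, (g x) ^ 2 =
            f x ^ 2 + (if x = x0 then 2 * (-s) * f x + s ^ 2 else 0) := by
          intro x
          by_cases h : x = x0 <;> simp [hg, h] <;> ring
        rw [Finset.sum_congr rfl (fun x _ => hpt x), Finset.sum_add_distrib,
          Finset.sum_ite_eq' Finset.univ x0 (fun x => 2 * (-s) * f x + s ^ 2)]
        simp only [Finset.mem_univ, if_true, hN]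
        ring
      have hSgpos : 0 < ∑ x, (g x) ^ 2 := by
        rw [hSg]
        have hfx0 : 0 ≤ f x0 := hfpos x0
        nlinarith [sq_nonneg s, hspos, hs2]
      have hg0 : g ≠ 0 := by
        intro h
        rw [h] at hSgpos
        simp at hSgpos
      have hgsupp : ∀ x, x ∉ Ω → g x = 0 := by
        intro x hx
        have hxne : x ≠ x0 := by rintro rfl; exact hx hx0
        simp [hg, hxne, hfsupp x hx]
      -- compute lap g
      set e : V → ℝ := fun x => (if x = x0 then (k : ℝ) else 0) -
        (if G.Adj x x0 then 1 else 0) with he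
      have hlapg : ∀ x, lap g x = lap f x + (-s) * e x := by
        intro x
        rw [hlap, hlap]
        have hsum : ∑ y ∈ G.neighborFinset x, g y =
            (∑ y ∈ G.neighborFinset x, f y) + (-s) * (if G.Adj x x0 then 1 else 0) := by
          simp only [hg, mul_ite, mul_one, mul_zero]
          rw [Finset.sum_add_distrib, Finset.sum_ite_eq' (G.neighborFinset x) x0
            (fun _ => (-s : ℝ))]
          simp [SimpleGraph.mem_neighborFinset]
        rw [hsum]
        by_cases h : x = x0 <;> simp [hg, he, h] <;> ring
      -- compute Dirichlet form of g
      have hfe : ∑ x, f x * e x = lap f x0 := by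
        have : ∀ x, f x * e x = (if x = x0 then (k : ℝ) * f x else 0) -
            (if G.Adj x x0 then f x else 0) := by
          intro x
          by_cases h : x = x0 <;> by_cases h2 : G.Adj x x0 <;> simp [he, h, h2] <;> ring
        rw [Finset.sum_congr rfl (fun x _ => this x), Finset.sum_sub_distrib,
          Finset.sum_ite_eq' Finset.univ x0 (fun x => (k : ℝ) * f x)]
        have hfilt : ∑ x, (if G.Adj x x0 then f x else 0) =
            ∑ y ∈ G.neighborFinset x0, f y := by
          rw [← Finset.sum_filter]
          congr 1
          ext y
          simp [SimpleGraph.mem_neighborFinset, G.adj_comm]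
        rw [hfilt, hlap]
        simp
      have hde : ∑ x, (if x = x0 then (1:ℝ) else 0) * e x = (k : ℝ) := by
        have : ∀ x, (if x = x0 then (1:ℝ) else 0) * e x =
            (if x = x0 then e x else 0) := by
          intro x; by_cases h : x = x0 <;> simp [h]
        rw [Finset.sum_congr rfl (fun x _ => this x),
          Finset.sum_ite_eq' Finset.univ x0 e]
        simp [he, G.irrefl]
      have hdlap : ∑ x, (if x = x0 then (1:ℝ) else 0) * lap f x = lap f x0 := by
        have : ∀ x, (if x = x0 then (1:ℝ) else 0) * lap f x =
            (if x = x0 then lap f x else 0) := by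
          intro x; by_cases h : x = x0 <;> simp [h]
        rw [Finset.sum_congr rfl (fun x _ => this x),
          Finset.sum_ite_eq' Finset.univ x0 (lap f)]
        simp
      have hDg : ∑ x, g x * lap g x =
          lam * N + 2 * (-s) * lap f x0 + s ^ 2 * (k : ℝ) := by
        have hpt : ∀ x, g x * lap g x = f x * lap f x + (-s) * (f x * e x)
            + (-s) * ((if x = x0 then (1:ℝ) else 0) * lap f x)
            + s ^ 2 * ((if x = x0 then (1:ℝ) else 0) * e x) := by
          intro x
          rw [hlapg]
          simp only [hg]
          ring
        rw [Finset.sum_congr rfl (fun x _ => hpt x)]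
        rw [Finset.sum_add_distrib, Finset.sum_add_distrib, Finset.sum_add_distrib,
          ← Finset.mul_sum, ← Finset.mul_sum, ← Finset.mul_sum, hfe, hde, hdlap, hD]
        ring
      -- minimality
      have hmem : (∑ x, g x * lap g x) / (∑ x, (g x) ^ 2) ∈
          {r : ℝ | ∃ g : V → ℝ, g ≠ 0 ∧ (∀ x, x ∉ Ω → g x = 0) ∧
            r = (∑ x, g x * lap g x) / (∑ x, (g x) ^ 2)} := ⟨g, hg0, hgsupp, rfl⟩
      have hle : lam ≤ (∑ x, g x * lap g x) / (∑ x, (g x) ^ 2) := hmin.2 hmem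
      rw [le_div_iff₀ hSgpos] at hle
      rw [hDg, hSg] at hle
      -- lam * (N - 2 s f x0 + s²) ≤ lam N - 2 s lap f x0 + s² k
      -- ⟹ 2 s c ≤ s² (k - lam) ⟹ 2 c ≤ s (k - lam)
      have hkey : 2 * c ≤ s * ((k : ℝ) - lam) := by
        have h2 : 2 * s * c ≤ s ^ 2 * ((k : ℝ) - lam) := by
          simp only [hcdef]; nlinarith [hle]
        nlinarith [hspos, h2]
      have habs2 : (k : ℝ) - lam ≤ |(k : ℝ) - lam| := le_abs_self _
      nlinarith [hspos, hkey, hs1, habs2, hcpos]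
    · -- outside Ω : f x0 = 0 and lap f x0 ≤ 0
      have hf0' : f x0 = 0 := hfsupp x0 hx0
      rw [hlap, hf0']
      have : 0 ≤ ∑ y ∈ G.neighborFinset x0, f y :=
        Finset.sum_nonneg (fun y _ => hfpos y)
      simp
      linarith
  -- lap commutes with automorphisms
  have hlapτ : ∀ (i : Fin d) (x : V), lap (fun y => f (τ i y)) x = lap f (τ i x) := by
    intro i x
    rw [hlap, hlap]
    have : ∑ y ∈ G.neighborFinset x, f (τ i y) =
        ∑ z ∈ G.neighborFinset (τ i x), f z := by
      apply Finset.sum_nbij' (fun y => τ i y) (fun z => (τ i).symm z)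
      · intro y hy
        rw [SimpleGraph.mem_neighborFinset] at *
        exact (τ i).map_adj_iff.mpr hy
      · intro z hz
        rw [SimpleGraph.mem_neighborFinset] at *
        have := (τ i).symm.map_adj_iff.mpr hz
        simpa using this
      · intro y _; simp
      · intro z _; simp
      · intro y _; rfl
    rw [this]
  -- linearity of lap on F
  have hlapF : ∀ x, lap F x = ∑ i, lap f (τ i x) := by
    intro x
    rw [hlap]
    have h1 : ∑ y ∈ G.neighborFinset x, F y =
        ∑ i, ∑ y ∈ G.neighborFinset x, f (τ i y) := by
      rw [Finset.sum_comm]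
      exact Finset.sum_congr rfl (fun y _ => hF y)
    rw [hF x, h1, Finset.mul_sum, ← Finset.sum_sub_distrib]
    refine Finset.sum_congr rfl (fun i _ => ?_)
    rw [← hlapτ i x, hlap]
  -- main computation
  calc ∑ x, F x * lap F x = ∑ x, ∑ i, ∑ j, f (τ i x) * lap f (τ j x) := by
        refine Finset.sum_congr rfl (fun x _ => ?_)
        rw [hF x, hlapF x, Finset.sum_mul_sum]
    _ ≤ ∑ x, ∑ i, ∑ j, f (τ i x) * (lam * f (τ j x)) := by
        refine Finset.sum_le_sum (fun x _ => Finset.sum_le_sum (fun i _ =>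
          Finset.sum_le_sum (fun j _ => ?_)))
        exact mul_le_mul_of_nonneg_left (EL (τ j x)) (hfpos _)
    _ = lam * ∑ x, (F x) ^ 2 := by
        rw [Finset.mul_sum]
        refine Finset.sum_congr rfl (fun x _ => ?_)
        have hsq : (F x) ^ 2 = ∑ i, ∑ j, f (τ i x) * f (τ j x) := by
          rw [hF x, sq, Finset.sum_mul_sum]
        rw [hsq]
        simp only [Finset.mul_sum]
        exact Finset.sum_congr rfl fun i _ => Finset.sum_congr rfl fun j _ => by ring
end

section
/- Let M be a commutative association scheme with 1-transitive symmetry group, o ∈ M a fixed point, D = {y₁,…,y_d} a design of strength t (i.e., Σ_{x∈D} φ(x) = 0 for every Laplacian eigenfunction φ with eigenvalue θ, 0 < θ < t), and τᵢ symmetries with τᵢ(yᵢ) = o. Let f be a spherical function around o and F(y) = Σᵢ f(τᵢ y). Then ⟨F, φ⟩ = 0 for every eigenfunction φ of the Laplacian with eigenvalue θ satisfying 0 < θ < t. -/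
open Matrix

/-- The delta function at `o`. -/
def deltaFn {X : Type*} [DecidableEq X] (o : X) : X → ℝ := fun y => if y = o then 1 else 0

/-- In a commutative association scheme with `1`-transitive symmetry group, if `D`
is a design of strength `t`, `τᵢ` are symmetries taking the design points to `o`,
`f` is spherical around `o` and `F(y) = Σᵢ f(τᵢ y)`, then `⟨F,φ⟩ = 0` for every
Laplacian eigenfunction `φ` with eigenvalue `θ ∈ (0,t)`. -/
theorem stmt_8 {X : Type*} [Fintype X] [DecidableEq X] [Nonempty X] (m : ℕ)
    (A E : Fin (m + 1) → Matrix X X ℝ) (n mult : Fin (m + 1) → ℝ)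
    (p : Fin (m + 1) → Fin (m + 1) → ℝ)
    (hA0 : A 0 = 1)
    (hA01 : ∀ k x y, A k x y = 0 ∨ A k x y = 1)
    (hAsym : ∀ k, (A k).IsSymm)
    (hAsum : ∑ k, A k = Matrix.of fun _ _ => (1 : ℝ))
    (hrow : ∀ k x, ∑ y, A k x y = n k)
    (hnpos : ∀ k, 0 < n k)
    (hEsym : ∀ j, (E j).IsSymm)
    (hEidem : ∀ j l, E j * E l = if j = l then E j else 0)
    (hEsum : ∑ j, E j = 1)
    (hAE : ∀ k, A k = ∑ j, p k j • E j)
    (hEA : ∀ j, ∃ q : Fin (m + 1) → ℝ, E j = ∑ k, q k • A k)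
    (hmult : ∀ j, (E j).trace = mult j)
    (hmultpos : ∀ j, 0 < mult j)
    -- the symmetry group acts `1`-transitively
    (htrans : ∀ x y : X, ∃ σ : X ≃ X, (∀ k a b, A k (σ a) (σ b) = A k a b) ∧ σ x = y)
    -- the Laplacian `Δ = n₁·I − A₁`
    (lap : (X → ℝ) → (X → ℝ))
    (hlap : ∀ f x, lap f x = n 1 * f x - (A 1).mulVec f x)
    (o : X) (t : ℝ) (d : ℕ) (y : Fin d → X)
    -- `D = {y₁,…,y_d}` is a design of strength `t`
    (hdesign : ∀ (θ : ℝ) (φ : X → ℝ), φ ≠ 0 → (∀ x, lap φ x = θ * φ x) →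
      0 < θ → θ < t → ∑ i, φ (y i) = 0)
    (τ : Fin d → X ≃ X)
    (hτsym : ∀ i k a b, A k (τ i a) (τ i b) = A k a b)
    (hτ : ∀ i, τ i (y i) = o)
    -- `f` is spherical around `o`
    (f : X → ℝ) (hf : ∃ c : Fin (m + 1) → ℝ,
      f = fun x => ∑ k, c k * (A k).mulVec (deltaFn o) x)
    (F : X → ℝ) (hF : ∀ x, F x = ∑ i, f (τ i x)) :
    ∀ (θ : ℝ) (φ : X → ℝ), φ ≠ 0 → (∀ x, lap φ x = θ * φ x) →
      0 < θ → θ < t → ∑ x, F x * φ x = 0 := by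
  intro θ φ hφ hφeig hθ0 hθt
  obtain ⟨c, hc⟩ := hf
  have hA1φ : (A 1).mulVec φ = fun x => (n 1 - θ) * φ x := by
    funext x
    have h := hφeig x
    rw [hlap] at h
    linarith
  have key : ∀ a b : Fin (m + 1), A a * A b = ∑ j, (p a j * p b j) • E j := by
    intro a b
    rw [hAE a, hAE b, Finset.sum_mul_sum]
    refine Finset.sum_congr rfl fun j _ => ?_
    have : ∀ l, (p a j • E j) * (p b l • E l) = (p a j * p b l) • (E j * E l) := by
      intro l
      rw [Matrix.smul_mul, Matrix.mul_smul, smul_smul]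
    simp_rw [this, hEidem, smul_ite, smul_zero]
    simp
  have hcomm : ∀ a b : Fin (m + 1), A a * A b = A b * A a := by
    intro a b
    rw [key, key]
    simp [mul_comm]
  have heig : ∀ k : Fin (m + 1), ∀ x, lap ((A k).mulVec φ) x = θ * (A k).mulVec φ x := by
    intro k x
    rw [hlap]
    have h1 : (A 1).mulVec ((A k).mulVec φ) = (A k).mulVec ((A 1).mulVec φ) := by
      rw [Matrix.mulVec_mulVec, Matrix.mulVec_mulVec, hcomm]
    rw [h1, hA1φ]
    have h2 : (A k).mulVec (fun z => (n 1 - θ) * φ z) x = (n 1 - θ) * (A k).mulVec φ x := by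
      simp only [Matrix.mulVec, dotProduct, Finset.mul_sum]
      exact Finset.sum_congr rfl fun z _ => by ring
    rw [h2]
    ring
  have hdsum : ∀ k : Fin (m + 1), ∑ i, (A k).mulVec φ (y i) = 0 := by
    intro k
    by_cases h0 : (A k).mulVec φ = 0
    · simp [h0]
    · exact hdesign θ _ h0 (heig k) hθ0 hθt
  have hdelta : ∀ (k : Fin (m + 1)) (z : X), (A k).mulVec (deltaFn o) z = A k z o := by
    intro k z
    simp [Matrix.mulVec, dotProduct, deltaFn, mul_ite]
  have hsymapp : ∀ (k : Fin (m + 1)) (a b : X), A k a b = A k b a := by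
    intro k a b
    have := hAsym k
    rw [Matrix.IsSymm] at this
    conv_lhs => rw [← this]
    rfl
  calc ∑ x, F x * φ x
      = ∑ x, ∑ i, f (τ i x) * φ x := by
        simp_rw [hF, Finset.sum_mul]
    _ = ∑ i, ∑ x, f (τ i x) * φ x := Finset.sum_comm
    _ = ∑ i, ∑ x, ∑ k, c k * (A k (y i) x * φ x) := by
        refine Finset.sum_congr rfl fun i _ => Finset.sum_congr rfl fun x _ => ?_
        rw [hc]
        simp_rw [hdelta]
        rw [Finset.sum_mul]
        refine Finset.sum_congr rfl fun k _ => ?_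
        have : A k (τ i x) o = A k x (y i) := by
          rw [← hτ i, hτsym]
        rw [this, hsymapp k x (y i)]
        ring
    _ = ∑ i, ∑ k, c k * (A k).mulVec φ (y i) := by
        refine Finset.sum_congr rfl fun i _ => ?_
        rw [Finset.sum_comm]
        refine Finset.sum_congr rfl fun k _ => ?_
        simp only [Matrix.mulVec, dotProduct, Finset.mul_sum]
    _ = ∑ k, ∑ i, c k * (A k).mulVec φ (y i) := Finset.sum_comm
    _ = ∑ k, c k * ∑ i, (A k).mulVec φ (y i) := by simp_rw [Finset.mul_sum]
    _ = 0 := by simp [hdsum]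
end

section
/- Let G be a finite k-regular graph with automorphism group I acting transitively, and suppose I is abelian. Let D = {y₁,…,y_d} be a design of strength t, o a fixed vertex, and τᵢ ∈ I with τᵢyᵢ = o. Then for every vertex y, the multiset {τᵢ⁻¹y : i = 1,…,d} is the image of D under a single automorphism of G; consequently Σᵢ φ(τᵢ⁻¹ y) = 0 for every Laplacian eigenfunction φ with eigenvalue in (0,t), and hence F = Σᵢ f∘τᵢ is orthogonal to all such φ for any f : V(G) → ℝ. -/
/-- If a transitive abelian group `I` of automorphisms acts on a finite `k`-regular
graph, `D = {y₁,…,y_d}` is a design of strength `t`, and `τᵢ ∈ I` with `τᵢyᵢ = o`,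
then for every vertex `y` the points `τᵢ⁻¹y` form an image of `D` under a single
automorphism; consequently `Σᵢ φ(τᵢ⁻¹ y) = 0` for every Laplacian eigenfunction `φ`
with eigenvalue in `(0,t)`, and `F = Σᵢ f∘τᵢ` is orthogonal to all such `φ`. -/
theorem stmt_10 {V : Type*} [Fintype V] [DecidableEq V]
    (G : SimpleGraph V) [DecidableRel G.Adj] (k : ℕ)
    (hreg : G.IsRegularOfDegree k)
    (I : Type*) [CommGroup I] [MulAction I V]
    (hauto : ∀ (g : I) (x y : V), G.Adj (g • x) (g • y) ↔ G.Adj x y)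
    (htrans : ∀ x y : V, ∃ g : I, g • x = y)
    (lap : (V → ℝ) → (V → ℝ))
    (hlap : ∀ f x, lap f x = k * f x - ∑ y ∈ G.neighborFinset x, f y)
    (t : ℝ) (d : ℕ) (ys : Fin d → V) (o : V)
    (hdesign : ∀ (θ : ℝ) (φ : V → ℝ), φ ≠ 0 → (∀ x, lap φ x = θ * φ x) →
      0 < θ → θ < t → ∑ i, φ (ys i) = 0)
    (τ : Fin d → I) (hτ : ∀ i, τ i • ys i = o) :
    (∀ y : V, ∃ β : I, ∀ i, β⁻¹ • ys i = (τ i)⁻¹ • y) ∧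
    (∀ (θ : ℝ) (φ : V → ℝ), φ ≠ 0 → (∀ x, lap φ x = θ * φ x) → 0 < θ → θ < t →
      (∀ y : V, ∑ i, φ ((τ i)⁻¹ • y) = 0) ∧
      (∀ f : V → ℝ, ∑ x, (∑ i, f (τ i • x)) * φ x = 0)) := by
  have key : ∀ y : V, ∃ β : I, ∀ i, β⁻¹ • ys i = (τ i)⁻¹ • y := by
    intro y
    obtain ⟨β, hβ⟩ := htrans y o
    refine ⟨β, fun i => ?_⟩
    have h1 : τ i • β⁻¹ • ys i = y := by
      rw [smul_smul, mul_comm, ← smul_smul, hτ, ← hβ, inv_smul_smul]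
    rw [← h1, inv_smul_smul]
  -- eigenfunctions are preserved by the group action
  have eig : ∀ (θ : ℝ) (φ : V → ℝ), (∀ x, lap φ x = θ * φ x) → ∀ β : I,
      ∀ x, lap (fun z => φ (β⁻¹ • z)) x = θ * φ (β⁻¹ • x) := by
    intro θ φ hφ β x
    rw [hlap]
    have hsum : ∑ y ∈ G.neighborFinset x, φ (β⁻¹ • y)
        = ∑ z ∈ G.neighborFinset (β⁻¹ • x), φ z := by
      apply Finset.sum_nbij' (fun y => β⁻¹ • y) (fun z => β • z)
      · intro a ha
        simp only [SimpleGraph.mem_neighborFinset] at ha ⊢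
        rw [← hauto β⁻¹ x a] at ha; exact ha
      · intro a ha
        simp only [SimpleGraph.mem_neighborFinset] at ha ⊢
        rw [← hauto β (β⁻¹ • x) a, smul_inv_smul] at ha; exact ha
      · intro a _; rw [smul_inv_smul]
      · intro a _; rw [inv_smul_smul]
      · intro a _; rfl
    rw [hsum, ← hlap, hφ]
  have part2 : ∀ (θ : ℝ) (φ : V → ℝ), φ ≠ 0 → (∀ x, lap φ x = θ * φ x) → 0 < θ → θ < t →
      (∀ y : V, ∑ i, φ ((τ i)⁻¹ • y) = 0) := by
    intro θ φ hne hφ h0 ht y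
    obtain ⟨β, hβ⟩ := key y
    have hψne : (fun z => φ (β⁻¹ • z)) ≠ 0 := by
      intro h
      apply hne
      funext w
      have := congrFun h (β • w)
      simpa [inv_smul_smul] using this
    have := hdesign θ (fun z => φ (β⁻¹ • z)) hψne (eig θ φ hφ β) h0 ht
    simpa only [hβ] using this
  refine ⟨key, fun θ φ hne hφ h0 ht => ⟨part2 θ φ hne hφ h0 ht, fun f => ?_⟩⟩
  have h := part2 θ φ hne hφ h0 ht
  calc ∑ x, (∑ i, f (τ i • x)) * φ x
      = ∑ i, ∑ x, f (τ i • x) * φ x := by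
        rw [Finset.sum_comm]; congr 1; funext x; rw [Finset.sum_mul]
    _ = ∑ i, ∑ y, f y * φ ((τ i)⁻¹ • y) := by
        refine Finset.sum_congr rfl fun i _ => ?_
        apply Finset.sum_nbij' (fun x => τ i • x) (fun y => (τ i)⁻¹ • y)
        · intro a _; exact Finset.mem_univ _
        · intro a _; exact Finset.mem_univ _
        · intro a _; rw [inv_smul_smul]
        · intro a _; rw [smul_inv_smul]
        · intro a _; rw [inv_smul_smul]
    _ = ∑ y, f y * ∑ i, φ ((τ i)⁻¹ • y) := by
        rw [Finset.sum_comm]; congr 1; funext y; rw [Finset.mul_sum]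
    _ = 0 := by simp [h]
end

section
/- Let G be a finite k-regular graph with a group I of automorphisms acting transitively on V(G), and I₀ ⊴ I a normal subgroup with I/I₀ abelian. Let D = {y₁,…,y_d} be a design of strength t, o ∈ V(G), τᵢ ∈ I with τᵢyᵢ = o, and let f : V(G) → ℝ be I₀-invariant. Then F = Σᵢ f∘τᵢ is orthogonal to every Laplacian eigenfunction with eigenvalue in (0,t). -/
/-- If `I` acts transitively by automorphisms on a finite `k`-regular graph,
`I₀ ⊴ I` is normal with abelian quotient, `D` is a design of strength `t`,
`τᵢ ∈ I` with `τᵢyᵢ = o`, and `f` is `I₀`-invariant, then `F = Σᵢ f∘τᵢ` is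
orthogonal to every Laplacian eigenfunction with eigenvalue in `(0,t)`. -/
theorem stmt_12 {V : Type*} [Fintype V] [DecidableEq V]
    (G : SimpleGraph V) [DecidableRel G.Adj] (k : ℕ)
    (hreg : G.IsRegularOfDegree k)
    (I : Type*) [Group I] [Fintype I] [MulAction I V]
    (hauto : ∀ (g : I) (x y : V), G.Adj (g • x) (g • y) ↔ G.Adj x y)
    (htrans : ∀ x y : V, ∃ g : I, g • x = y)
    (I₀ : Subgroup I) (hnormal : I₀.Normal)
    (habelian : ∀ a b : I, a * b * a⁻¹ * b⁻¹ ∈ I₀)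
    (lap : (V → ℝ) → (V → ℝ))
    (hlap : ∀ f x, lap f x = k * f x - ∑ y ∈ G.neighborFinset x, f y)
    (t : ℝ) (d : ℕ) (ys : Fin d → V) (o : V)
    (hdesign : ∀ (θ : ℝ) (φ : V → ℝ), φ ≠ 0 → (∀ x, lap φ x = θ * φ x) →
      0 < θ → θ < t → ∑ i, φ (ys i) = 0)
    (τ : Fin d → I) (hτ : ∀ i, τ i • ys i = o)
    (f : V → ℝ) (hfinv : ∀ α ∈ I₀, ∀ x : V, f (α • x) = f x)
    (F : V → ℝ) (hF : ∀ x, F x = ∑ i, f (τ i • x)) :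
    ∀ (θ : ℝ) (φ : V → ℝ), φ ≠ 0 → (∀ x, lap φ x = θ * φ x) →
      0 < θ → θ < t → ∑ x, F x * φ x = 0 := by
  intro θ φ hφ0 hφ hθ0 hθt
  classical
  -- pullback of an eigenfunction by a group element is an eigenfunction
  have pull : ∀ (g : I) (χ : V → ℝ), (∀ x, lap χ x = θ * χ x) →
      ∀ x, lap (fun y => χ (g • y)) x = θ * χ (g • x) := by
    intro g χ hχ x
    have hnb : ∑ y ∈ G.neighborFinset x, χ (g • y)
        = ∑ y ∈ G.neighborFinset (g • x), χ y := by
      refine Finset.sum_equiv (MulAction.toPerm g) ?_ ?_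
      · intro y
        simp only [SimpleGraph.mem_neighborFinset, MulAction.toPerm_apply]
        exact (hauto g x y).symm
      · intro y _; rfl
    have h := hχ (g • x)
    rw [hlap] at h ⊢
    rw [hnb]; exact h
  set ψ : V → ℝ := fun x => ∑ α : I₀, φ ((α : I) • x) with hψdef
  have hψ : ∀ x, lap ψ x = θ * ψ x := by
    intro x
    rw [hlap]
    have hsw : ∑ y ∈ G.neighborFinset x, ψ y
        = ∑ α : I₀, ∑ y ∈ G.neighborFinset x, φ ((α : I) • y) := by
      simp only [hψdef]; rw [Finset.sum_comm]
    rw [hsw, hψdef]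
    simp only [Finset.mul_sum]
    rw [← Finset.sum_sub_distrib]
    refine Finset.sum_congr rfl fun α _ => ?_
    have h := pull (α : I) φ hφ x
    rw [hlap] at h
    exact h
  have hψinv : ∀ c ∈ I₀, ∀ x : V, ψ (c • x) = ψ x := by
    intro c hc x
    simp only [hψdef]
    refine Fintype.sum_equiv (Equiv.mulRight (⟨c, hc⟩ : I₀)) _ _ fun α => ?_
    simp [mul_smul]
  have hψshift : ∀ (g : I) (x : V), (∑ α : I₀, φ ((g * (α : I)) • x)) = ψ (g • x) := by
    intro g x
    simp only [hψdef]
    let e : I₀ ≃ I₀ :=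
      { toFun := fun α => ⟨g * (α : I) * g⁻¹, hnormal.conj_mem (α : I) α.2 g⟩
        invFun := fun α => ⟨g⁻¹ * (α : I) * g, by
          simpa using hnormal.conj_mem (α : I) α.2 g⁻¹⟩
        left_inv := by intro α; ext; simp; group
        right_inv := by intro α; ext; simp; group }
    refine Fintype.sum_equiv e _ _ fun α => ?_
    show φ ((g * (α : I)) • x) = φ ((g * (α : I) * g⁻¹) • (g • x))
    rw [← mul_smul]
    congr 1
    group
  have hcomm : ∀ (g h : I) (x : V), ψ ((g * h) • x) = ψ ((h * g) • x) := by
    intro g h x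
    have hc : g * h * (h * g)⁻¹ ∈ I₀ := by
      have := habelian g h
      simpa [mul_inv_rev, mul_assoc] using this
    have he : (g * h) • x = (g * h * (h * g)⁻¹) • ((h * g) • x) := by
      rw [← mul_smul, inv_mul_cancel_right]
    rw [he, hψinv _ hc]
  have key : ∀ z : V, (∑ i, ψ ((τ i)⁻¹ • z)) = 0 := by
    intro z
    obtain ⟨g, hg⟩ := htrans o z
    have heq : ∀ i, ψ ((τ i)⁻¹ • z) = ψ (g • ys i) := by
      intro i
      have h1 : (τ i)⁻¹ • z = ((τ i)⁻¹ * g) • o := by rw [mul_smul, hg]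
      have h2 : (g * (τ i)⁻¹) • o = g • ys i := by
        rw [mul_smul]
        congr 1
        rw [inv_smul_eq_iff]
        exact (hτ i).symm
      rw [h1, hcomm, h2]
    rw [Finset.sum_congr rfl fun i _ => heq i]
    by_cases h0 : (fun x => ψ (g • x)) = 0
    · refine Finset.sum_eq_zero fun i _ => ?_
      exact congrFun h0 (ys i)
    · exact hdesign θ _ h0 (pull g ψ hψ) hθ0 hθt
  have hcard : (0 : ℝ) < (Fintype.card I₀ : ℝ) := by
    exact_mod_cast Fintype.card_pos
  have main : (Fintype.card I₀ : ℝ) * (∑ x, F x * φ x) = 0 := by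
    have step1 : ∑ x, F x * φ x = ∑ i, ∑ x, f (τ i • x) * φ x := by
      rw [Finset.sum_comm]
      refine Finset.sum_congr rfl fun x _ => ?_
      rw [hF, Finset.sum_mul]
    have step2 : ∀ i : Fin d, ∑ x, f (τ i • x) * φ x
        = ∑ z, f z * φ ((τ i)⁻¹ • z) := by
      intro i
      refine Fintype.sum_equiv (MulAction.toPerm (τ i)) _ _ fun x => ?_
      simp [inv_smul_smul]
    have step3 : ∀ i : Fin d, (Fintype.card I₀ : ℝ) * ∑ z, f z * φ ((τ i)⁻¹ • z)
        = ∑ z, f z * ψ ((τ i)⁻¹ • z) := by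
      intro i
      have : ∀ α : I₀, ∑ z, f z * φ ((τ i)⁻¹ • z)
          = ∑ z, f z * φ (((τ i)⁻¹ * (α : I)) • z) := by
        intro α
        refine Fintype.sum_equiv (MulAction.toPerm ((α : I)⁻¹)) _ _ fun z => ?_
        simp only [MulAction.toPerm_apply]
        rw [← mul_smul, mul_inv_cancel_right,
          ← hfinv (α : I) α.2 ((α : I)⁻¹ • z), smul_inv_smul]
      calc (Fintype.card I₀ : ℝ) * ∑ z, f z * φ ((τ i)⁻¹ • z)
          = ∑ α : I₀, ∑ z, f z * φ (((τ i)⁻¹ * (α : I)) • z) := by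
            rw [Finset.sum_congr rfl fun α _ => (this α).symm]
            simp [Finset.sum_const, nsmul_eq_mul]
        _ = ∑ z, ∑ α : I₀, f z * φ (((τ i)⁻¹ * (α : I)) • z) := by rw [Finset.sum_comm]
        _ = ∑ z, f z * ψ ((τ i)⁻¹ • z) := by
            refine Finset.sum_congr rfl fun z _ => ?_
            rw [← Finset.mul_sum, hψshift]
    calc (Fintype.card I₀ : ℝ) * (∑ x, F x * φ x)
        = ∑ i, (Fintype.card I₀ : ℝ) * ∑ z, f z * φ ((τ i)⁻¹ • z) := by
          rw [step1, Finset.mul_sum]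
          exact Finset.sum_congr rfl fun i _ => by rw [step2 i]
      _ = ∑ i, ∑ z, f z * ψ ((τ i)⁻¹ • z) := Finset.sum_congr rfl fun i _ => step3 i
      _ = ∑ z, f z * ∑ i, ψ ((τ i)⁻¹ • z) := by
          rw [Finset.sum_comm]
          exact Finset.sum_congr rfl fun z _ => (Finset.mul_sum _ _ _).symm
      _ = 0 := by
          refine Finset.sum_eq_zero fun z _ => ?_
          rw [key z, mul_zero]
  have := mul_eq_zero.mp main
  rcases this with h | h
  · exact absurd h (ne_of_gt hcard)
  · exact h
end

section
/- Let M be a finite set with a transitive group I of symmetries, fix o ∈ M with stabilizer I₀, and let Δ be a symmetric linear operator on ℝ^M commuting with the I-action. Suppose that for each eigenvalue θ of Δ, the space of I₀-invariant θ-eigenfunctions has dimension at most 1, and the unique (up to scalar) invariant eigenfunction φ_θ satisfies φ_θ(o) = 1. Let D = {y₁,…,y_d} satisfy Σ_{x∈D} φ(x) = 0 for all eigenfunctions φ with eigenvalue θ ∈ (0,t), let τᵢ ∈ I with τᵢyᵢ = o, let f be I₀-invariant, and F = Σᵢ f∘τᵢ. Then ⟨F,φ⟩ = 0 for every eigenfunction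 φ with eigenvalue in (0,t). -/
/-- Unique-invariant-eigenfunction lemma (discrete version): let a finite group `I`
act transitively on a finite set `M`, let `Δ` (here `L`) be a symmetric operator
commuting with the action, and suppose every `I₀`-invariant `θ`-eigenfunction is a
multiple of the normalized invariant eigenfunction `φθ θ` (with `φθ θ o = 1`),
where `I₀` is the stabilizer of `o`. If `D = {y₁,…,y_d}` is a design of strength
`t`, `τᵢ yᵢ = o`, and `f` is `I₀`-invariant, then `F = Σᵢ f∘τᵢ` is orthogonal to
every eigenfunction with eigenvalue in `(0,t)`. -/
theorem stmt_13 {M : Type*} [Fintype M] [DecidableEq M]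
    (I : Type*) [Group I] [Fintype I] [MulAction I M]
    (htrans : ∀ x y : M, ∃ g : I, g • x = y)
    (o : M)
    (L : (M → ℝ) →ₗ[ℝ] (M → ℝ))
    (hsym : ∀ f g : M → ℝ, ∑ x, L f x * g x = ∑ x, f x * L g x)
    (hcomm : ∀ (g : I) (f : M → ℝ) (x : M), L (fun z => f (g • z)) x = L f (g • x))
    (φθ : ℝ → (M → ℝ))
    (hφθo : ∀ θ : ℝ, φθ θ o = 1)
    (huniq : ∀ (θ : ℝ) (ψ : M → ℝ), (∀ x, L ψ x = θ * ψ x) →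
      (∀ α : I, α ∈ MulAction.stabilizer I o → ∀ x, ψ (α • x) = ψ x) →
      ψ = fun x => ψ o * φθ θ x)
    (t : ℝ) (d : ℕ) (ys : Fin d → M)
    (hdesign : ∀ (θ : ℝ) (φ : M → ℝ), φ ≠ 0 → (∀ x, L φ x = θ * φ x) →
      0 < θ → θ < t → ∑ i, φ (ys i) = 0)
    (τ : Fin d → I) (hτ : ∀ i, τ i • ys i = o)
    (f : M → ℝ)
    (hfinv : ∀ α : I, α ∈ MulAction.stabilizer I o → ∀ x : M, f (α • x) = f x)
    (F : M → ℝ) (hF : ∀ x, F x = ∑ i, f (τ i • x)) :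
    ∀ (θ : ℝ) (φ : M → ℝ), φ ≠ 0 → (∀ x, L φ x = θ * φ x) →
      0 < θ → θ < t → ∑ x, F x * φ x = 0 := by
  intro θ φ hφ heig hθ0 hθt
  classical
  set S := MulAction.stabilizer I o with hS
  set ψ : Fin d → M → ℝ := fun i y => ∑ α : S, φ (((α : I) * τ i)⁻¹ • y) with hψ
  -- ψ i is a θ-eigenfunction
  have heigψ : ∀ i x, L (ψ i) x = θ * ψ i x := by
    intro i x
    have h1 : ψ i = ∑ α : S, (fun y => φ (((α : I) * τ i)⁻¹ • y)) := by
      funext y; simp [hψ]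
    rw [h1, map_sum, Finset.sum_apply]
    have h2 : ∀ α : S, (L fun y => φ (((α : I) * τ i)⁻¹ • y)) x
        = θ * φ (((α : I) * τ i)⁻¹ • x) := by
      intro α; rw [hcomm, heig]
    rw [Finset.sum_congr rfl (fun α _ => h2 α), ← Finset.mul_sum]
    simp [Finset.sum_apply]
  -- ψ i is I₀-invariant
  have hinvψ : ∀ i, ∀ β : I, β ∈ S → ∀ y, ψ i (β • y) = ψ i y := by
    intro i β hβ y
    simp only [hψ]
    refine Fintype.sum_equiv (Equiv.mulLeft (⟨β, hβ⟩ : S)⁻¹) _ _ ?_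
    intro α
    congr 1
    simp [mul_inv_rev, mul_smul]
  -- value at o
  have hψo : ∀ i, ψ i o = (Fintype.card S : ℝ) * φ (ys i) := by
    intro i
    have hy : ∀ α : S, ((α : I) * τ i)⁻¹ • o = ys i := by
      intro α
      have hα : (α : I)⁻¹ • o = o := by
        have h := α.2
        rw [MulAction.mem_stabilizer_iff] at h
        rw [inv_smul_eq_iff, h]
      calc ((α : I) * τ i)⁻¹ • o = (τ i)⁻¹ • ((α : I)⁻¹ • o) := by
            rw [mul_inv_rev, mul_smul]
        _ = (τ i)⁻¹ • o := by rw [hα]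
        _ = ys i := by rw [← hτ i, inv_smul_smul]
    have h6 : ψ i o = ∑ _α : S, φ (ys i) :=
      Finset.sum_congr rfl (fun α _ => by rw [hy α])
    rw [h6, Finset.sum_const]
    simp [nsmul_eq_mul]
  have hψeq : ∀ i, ψ i = fun x => ψ i o * φθ θ x :=
    fun i => huniq θ (ψ i) (heigψ i) (fun α hα x => hinvψ i α hα x)
  set C : ℝ := ∑ y, f y * φθ θ y with hC
  have hcardne : (Fintype.card S : ℝ) ≠ 0 := by
    exact_mod_cast Fintype.card_ne_zero
  -- per-i identity
  have hi : ∀ i, ∑ x, f (τ i • x) * φ x = φ (ys i) * C := by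
    intro i
    have h1 : ∑ y, f y * ψ i y
        = (Fintype.card S : ℝ) * ∑ x, f (τ i • x) * φ x := by
      have hswap : ∑ y, f y * ψ i y
          = ∑ α : S, ∑ y, f y * φ (((α : I) * τ i)⁻¹ • y) := by
        simp only [hψ, Finset.mul_sum]
        rw [Finset.sum_comm]
      rw [hswap]
      have hterm : ∀ α : S, ∑ y, f y * φ (((α : I) * τ i)⁻¹ • y)
          = ∑ x, f (τ i • x) * φ x := by
        intro α
        refine Fintype.sum_equiv (MulAction.toPerm (((α : I) * τ i)⁻¹)) _ _ ?_
        intro y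
        have h4 : f (τ i • ((α : I) * τ i)⁻¹ • y) = f y := by
          have h5 : τ i • ((α : I) * τ i)⁻¹ • y = (α : I)⁻¹ • y := by
            rw [mul_inv_rev, mul_smul, smul_inv_smul]
          rw [h5]
          exact hfinv ((α : I)⁻¹) (S.inv_mem α.2) y
        show f y * φ (((α : I) * τ i)⁻¹ • y)
            = f (τ i • ((α : I) * τ i)⁻¹ • y) * φ (((α : I) * τ i)⁻¹ • y)
        rw [h4]
      rw [Finset.sum_congr rfl (fun α _ => hterm α), Finset.sum_const]
      simp [nsmul_eq_mul]
    have h2 : ∑ y, f y * ψ i y = (Fintype.card S : ℝ) * (φ (ys i) * C) := by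
      conv_lhs => rw [hψeq i]
      have h5 : ∑ y, f y * (ψ i o * φθ θ y) = ψ i o * C := by
        rw [hC, Finset.mul_sum]
        exact Finset.sum_congr rfl (fun y _ => by ring)
      rw [h5, hψo i, mul_assoc]
    exact mul_left_cancel₀ hcardne (h1.symm.trans h2)
  have hsum := hdesign θ φ hφ heig hθ0 hθt
  calc ∑ x, F x * φ x = ∑ x, (∑ i, f (τ i • x)) * φ x := by
        exact Finset.sum_congr rfl (fun x _ => by rw [hF])
    _ = ∑ i, ∑ x, f (τ i • x) * φ x := by
        simp only [Finset.sum_mul]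
        rw [Finset.sum_comm]
    _ = ∑ i, φ (ys i) * C := Finset.sum_congr rfl (fun i _ => hi i)
    _ = (∑ i, φ (ys i)) * C := (Finset.sum_mul _ _ _).symm
    _ = 0 := by rw [hsum, zero_mul]
end
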